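/- Let a be a constant. Every answer set S of the common core program CC(a) contains act(a), contains exactly one of the literals O(a) and ¬O(a), exactly one of F(a) and ¬F(a), and exactly one of Do(a) and ¬Do(a), and does not contain the atom Dia(a). -/

import Mathlib

namespace ASP

/-- Atoms: the predicates of the common core applied to a constant. -/
inductive Atom (C : Type) where
  | act : C → Atom C
  | O : C → Atom C
  | F : C → Atom C
  | Do : C → Atom C
  | Dia : C → Atom C
  | Happens : C → Atom C
  | Location : C → Atom C
  deriving DecidableEq

/-- A literal is an atom or its strong negation. -/
inductive Lit (C : Type) where
  | pos : Atom C → Lit C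
  | neg : Atom C → Lit C
  deriving DecidableEq

/-- A ground rule: head, positive body, default-negated body. -/
structure Rule (C : Type) where
  head : Set (Lit C)
  pos : Set (Lit C)
  neg : Set (Lit C)

variable {C : Type}

/-- S satisfies the body of r: pos(r) ⊆ S and neg(r) ∩ S = ∅. -/
def SatBody (S : Set (Lit C)) (r : Rule C) : Prop :=
  r.pos ⊆ S ∧ r.neg ∩ S = ∅

/-- S satisfies the head of r: H(r) ∩ S ≠ ∅. -/
def SatHead (S : Set (Lit C)) (r : Rule C) : Prop :=
  (r.head ∩ S).Nonempty

/-- S satisfies a rule r: if S satisfies the body then S satisfies the head. -/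
def Satisfies (S : Set (Lit C)) (r : Rule C) : Prop :=
  SatBody S r → SatHead S r

/-- A set of literals is consistent if it contains no atom together with
its strong negation. -/
def Consistent (S : Set (Lit C)) : Prop :=
  ∀ p : Atom C, ¬ (Lit.pos p ∈ S ∧ Lit.neg p ∈ S)

/-- The reduct Π(S): the rules of Π whose body is satisfied by S. -/
def reduct (P : Set (Rule C)) (S : Set (Lit C)) : Set (Rule C) :=
  {r ∈ P | SatBody S r}

/-- S is an answer set of Π iff S is consistent, S satisfies the head of every
rule in the reduct Π(S), and no proper subset of S satisfies every rule of Π(S). -/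
def IsAnswerSet (P : Set (Rule C)) (S : Set (Lit C)) : Prop :=
  Consistent S ∧ (∀ r ∈ reduct P S, SatHead S r) ∧
    ∀ S' : Set (Lit C), S' ⊂ S → ¬ (∀ r ∈ reduct P S, Satisfies S' r)

/-- The common core program CC(a): the fact act(a) and rules (1)–(9). -/
def CC (a : C) : Set (Rule C) :=
  { ⟨{.pos (.act a)}, ∅, ∅⟩,                                      -- fact act(a)
    ⟨{.pos (.O a), .neg (.O a)}, {.pos (.act a)}, ∅⟩,             -- (1)
    ⟨{.pos (.F a), .neg (.F a)}, {.pos (.act a)}, ∅⟩,             -- (2)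
    ⟨∅, {.pos (.O a), .neg (.Dia a)}, ∅⟩,                         -- (3)
    ⟨{.neg (.Dia a)}, {.neg (.Do a), .pos (.act a)}, ∅⟩,          -- (4)
    ⟨∅, {.pos (.O a), .pos (.F a)}, ∅⟩,                           -- (5)
    ⟨{.pos (.Do a), .neg (.Do a)}, {.pos (.act a)}, ∅⟩,           -- (6)
    ⟨∅, {.pos (.F a), .pos (.Do a)}, ∅⟩,                          -- (7)
    ⟨{.pos (.Happens a)}, {.pos (.Do a)}, ∅⟩,                     -- (8)
    ⟨∅, {.pos (.Do a), .neg (.Dia a)}, ∅⟩ }                       -- (9)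

def A1 (a : C) : Set (Lit C) :=
  {.pos (.act a), .pos (.O a), .neg (.F a), .pos (.Do a), .pos (.Happens a)}

def A2 (a : C) : Set (Lit C) :=
  {.pos (.act a), .pos (.F a), .neg (.O a), .neg (.Do a), .neg (.Dia a)}

def A3 (a : C) : Set (Lit C) :=
  {.pos (.act a), .neg (.F a), .neg (.O a), .neg (.Do a), .neg (.Dia a)}

def A4 (a : C) : Set (Lit C) :=
  {.pos (.act a), .neg (.F a), .neg (.O a), .pos (.Do a), .pos (.Happens a)}

/-- A weak constraint: body (pos, neg), weight w and level l. -/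
structure WeakConstraint (C : Type) where
  pos : Finset (Lit C)
  neg : Finset (Lit C)
  w : ℕ
  l : ℕ
  deriving DecidableEq

/-- S violates a weak constraint c iff pos(c) ⊆ S and neg(c) ∩ S = ∅. -/
def Violates (S : Set (Lit C)) (c : WeakConstraint C) : Prop :=
  ↑c.pos ⊆ S ∧ ↑c.neg ∩ S = ∅

open Classical in
/-- The penalty of S at level lvl: the sum of the weights of the violated
weak constraints of level lvl. -/
noncomputable def penalty (W : Finset (WeakConstraint C)) (S : Set (Lit C))
    (lvl : ℕ) : ℕ :=
  ∑ c ∈ W, if c.l = lvl ∧ Violates S c then c.w else 0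

/-- S is an optimal answer set of Π w.r.t. W iff S is an answer set of Π and
there is no answer set S' of Π and level lvl with strictly smaller penalty at
lvl and equal penalties at all higher levels. -/
def IsOptimalAnswerSet (P : Set (Rule C)) (W : Finset (WeakConstraint C))
    (S : Set (Lit C)) : Prop :=
  IsAnswerSet P S ∧
    ¬ ∃ (S' : Set (Lit C)) (lvl : ℕ), IsAnswerSet P S' ∧
        penalty W S' lvl < penalty W S lvl ∧
        ∀ l', lvl < l' → penalty W S' l' = penalty W S l'

variable [DecidableEq C]

/-- WC(a): the weak constraints ':~ O(a) [1:1]' and ':~ F(a) [1:1]'. -/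
def WC (a : C) : Finset (WeakConstraint C) :=
  { ⟨{.pos (.O a)}, ∅, 1, 1⟩, ⟨{.pos (.F a)}, ∅, 1, 1⟩ }


/-- every answer set of CC(a) contains act(a), exactly one of
O(a)/¬O(a), exactly one of F(a)/¬F(a), exactly one of Do(a)/¬Do(a), and does
not contain the atom Dia(a). -/
theorem stmt6 {C : Type} (a : C) :
    ∀ S : Set (Lit C), IsAnswerSet (CC a) S →
      Lit.pos (Atom.act a) ∈ S ∧
      ((Lit.pos (Atom.O a) ∈ S ∧ Lit.neg (Atom.O a) ∉ S) ∨
        (Lit.pos (Atom.O a) ∉ S ∧ Lit.neg (Atom.O a) ∈ S)) ∧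
      ((Lit.pos (Atom.F a) ∈ S ∧ Lit.neg (Atom.F a) ∉ S) ∨
        (Lit.pos (Atom.F a) ∉ S ∧ Lit.neg (Atom.F a) ∈ S)) ∧
      ((Lit.pos (Atom.Do a) ∈ S ∧ Lit.neg (Atom.Do a) ∉ S) ∨
        (Lit.pos (Atom.Do a) ∉ S ∧ Lit.neg (Atom.Do a) ∈ S)) ∧
      Lit.pos (Atom.Dia a) ∉ S := by
  intro S hS
  obtain ⟨hcons, hsat, hmin⟩ := hS
  have hact : Lit.pos (Atom.act a) ∈ S := by
    obtain ⟨l, hl, hlS⟩ := hsat ⟨{.pos (.act a)}, ∅, ∅⟩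
      ⟨by simp [CC], by constructor <;> simp⟩
    simp at hl; subst hl; exact hlS
  have hbody : SatBody S (⟨{Lit.pos (Atom.O a), Lit.neg (Atom.O a)},
      {Lit.pos (Atom.act a)}, ∅⟩ : Rule C) :=
    ⟨Set.singleton_subset_iff.2 hact, by simp⟩
  have exO : Lit.pos (Atom.O a) ∈ S ∨ Lit.neg (Atom.O a) ∈ S := by
    obtain ⟨l, hl, hlS⟩ := hsat ⟨{.pos (.O a), .neg (.O a)}, {.pos (.act a)}, ∅⟩
      ⟨by simp [CC], ⟨Set.singleton_subset_iff.2 hact, by simp⟩⟩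
    simp at hl; rcases hl with h | h <;> subst h <;> [left; right] <;> exact hlS
  have exF : Lit.pos (Atom.F a) ∈ S ∨ Lit.neg (Atom.F a) ∈ S := by
    obtain ⟨l, hl, hlS⟩ := hsat ⟨{.pos (.F a), .neg (.F a)}, {.pos (.act a)}, ∅⟩
      ⟨by simp [CC], ⟨Set.singleton_subset_iff.2 hact, by simp⟩⟩
    simp at hl; rcases hl with h | h <;> subst h <;> [left; right] <;> exact hlS
  have exD : Lit.pos (Atom.Do a) ∈ S ∨ Lit.neg (Atom.Do a) ∈ S := by
    obtain ⟨l, hl, hlS⟩ := hsat ⟨{.pos (.Do a), .neg (.Do a)}, {.pos (.act a)}, ∅⟩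
      ⟨by simp [CC], ⟨Set.singleton_subset_iff.2 hact, by simp⟩⟩
    simp at hl; rcases hl with h | h <;> subst h <;> [left; right] <;> exact hlS
  have hDia : Lit.pos (Atom.Dia a) ∉ S := by
    intro hd
    apply hmin (S \ {Lit.pos (Atom.Dia a)}) (Set.sdiff_singleton_ssubset.2 hd)
    intro r hr _
    obtain ⟨l, hl, hlS⟩ := hsat r hr
    refine ⟨l, hl, hlS, ?_⟩
    have hrCC := hr.1
    simp [CC] at hrCC
    rcases hrCC with h|h|h|h|h|h|h|h|h|h <;> subst h <;> simp at hl <;>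
      first
      | (subst hl; simp)
      | (rcases hl with rfl | rfl <;> simp)
  refine ⟨hact, ?_, ?_, ?_, hDia⟩
  · rcases exO with h | h
    · exact Or.inl ⟨h, fun h' => hcons _ ⟨h, h'⟩⟩
    · exact Or.inr ⟨fun h' => hcons _ ⟨h', h⟩, h⟩
  · rcases exF with h | h
    · exact Or.inl ⟨h, fun h' => hcons _ ⟨h, h'⟩⟩
    · exact Or.inr ⟨fun h' => hcons _ ⟨h', h⟩, h⟩
  · rcases exD with h | h
    · exact Or.inl ⟨h, fun h' => hcons _ ⟨h, h'⟩⟩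
    · exact Or.inr ⟨fun h' => hcons _ ⟨h', h⟩, h⟩

end ASP
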